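/- arXiv:1404.1667 — 4 statements merged into one kernel-verified Lean document; each statement's English description precedes it below -/
import Mathlib

section
/- Suppose X is a symmetric solution of X A₀ + A₀^T X − X B R† B^T X + Q₀ = 0 with Q₀ positive semidefinite. Then ker X is invariant under A₀, i.e., A₀ (ker X) ⊆ ker X. -/
open Matrix

/-- The four Moore–Penrose conditions for `Rd` being the pseudo-inverse of `R`. -/
def IsMoorePenroseInv {m : ℕ} (R Rd : Matrix (Fin m) (Fin m) ℝ) : Prop :=
  R * Rd * R = R ∧ Rd * R * Rd = Rd ∧ (R * Rd)ᵀ = R * Rd ∧ (Rd * R)ᵀ = Rd * R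

/-- If symmetric `X` solves `X A₀ + A₀ᵀ X − X B R† Bᵀ X + Q₀ = 0` with `Q₀` PSD,
then `ker X` is `A₀`-invariant. -/
theorem kerX_A0_invariant {n m : ℕ}
    (A0 X Q0 : Matrix (Fin n) (Fin n) ℝ) (B : Matrix (Fin n) (Fin m) ℝ)
    (R Rd : Matrix (Fin m) (Fin m) ℝ)
    (hX : Xᵀ = X) (hQ0sym : Q0ᵀ = Q0) (hQ0 : Q0.PosSemidef)
    (hR : Rᵀ = R) (hRpsd : R.PosSemidef) (hMP : IsMoorePenroseInv R Rd)
    (heq : X * A0 + A0ᵀ * X - X * B * Rd * Bᵀ * X + Q0 = 0) :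
    ∀ v : Fin n → ℝ, X *ᵥ v = 0 → X *ᵥ (A0 *ᵥ v) = 0 := by
  intro v hv
  -- apply the Riccati equation to v
  have hv' : (X * A0 + A0ᵀ * X - X * B * Rd * Bᵀ * X + Q0) *ᵥ v = 0 := by
    rw [heq, zero_mulVec]
  have hAv : A0ᵀ *ᵥ (X *ᵥ v) = 0 := by rw [hv, mulVec_zero]
  have hBv : (X * B * Rd * Bᵀ * X) *ᵥ v = 0 := by
    have : (X * B * Rd * Bᵀ) *ᵥ (X *ᵥ v) = 0 := by rw [hv, mulVec_zero]
    rwa [mulVec_mulVec] at this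
  have hmain : X *ᵥ (A0 *ᵥ v) + Q0 *ᵥ v = 0 := by
    have := hv'
    rw [add_mulVec, sub_mulVec, add_mulVec, ← mulVec_mulVec, ← mulVec_mulVec,
      hv, mulVec_zero, add_zero, hBv, sub_zero] at this
    exact this
  -- show vᵀ Q₀ v = 0
  have hdot : star v ⬝ᵥ Q0 *ᵥ v = 0 := by
    have h1 : v ⬝ᵥ (X *ᵥ (A0 *ᵥ v) + Q0 *ᵥ v) = 0 := by rw [hmain, dotProduct_zero]
    have h2 : v ⬝ᵥ X *ᵥ (A0 *ᵥ v) = 0 := by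
      rw [dotProduct_mulVec, ← mulVec_transpose, hX, hv, zero_dotProduct]
    rw [dotProduct_add, h2, zero_add] at h1
    simpa using h1
  have hQv : Q0 *ᵥ v = 0 := (hQ0.dotProduct_mulVec_zero_iff v).mp hdot
  have := hmain
  rw [hQv, add_zero] at this
  exact this
end

section
/- Suppose X is a symmetric solution of X A₀ + A₀^T X − X B R† B^T X + Q₀ = 0 with Q₀ positive semidefinite, and suppose X B G = 0 where G = I − R† R. Then Q₀ B G = 0. -/
open Matrix

/-- If symmetric `X` solves `X A₀ + A₀ᵀ X − X B R† Bᵀ X + Q₀ = 0` with `Q₀` PSD and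
`X B G = 0` where `G = I − R† R`, then `Q₀ B G = 0`. -/
theorem Q0_BG_eq_zero {n m : ℕ}
    (A0 X Q0 : Matrix (Fin n) (Fin n) ℝ) (B : Matrix (Fin n) (Fin m) ℝ)
    (R Rd : Matrix (Fin m) (Fin m) ℝ)
    (hX : Xᵀ = X) (hQ0sym : Q0ᵀ = Q0) (hQ0 : Q0.PosSemidef)
    (hR : Rᵀ = R) (hRpsd : R.PosSemidef) (hMP : IsMoorePenroseInv R Rd)
    (heq : X * A0 + A0ᵀ * X - X * B * Rd * Bᵀ * X + Q0 = 0)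
    (hXBG : X * B * (1 - Rd * R) = 0) :
    Q0 * B * (1 - Rd * R) = 0 := by
  set G : Matrix (Fin m) (Fin m) ℝ := 1 - Rd * R with hG
  have hXH : Xᴴ = X := by rw [Matrix.conjTranspose_eq_transpose_of_trivial, hX]
  have h1 : X * (B * G) = 0 := by rw [← Matrix.mul_assoc]; exact hXBG
  have h2 : ∀ Y : Matrix (Fin n) (Fin m) ℝ, (B * G)ᴴ * (X * Y) = 0 := by
    intro Y
    have : (B * G)ᴴ * X = 0 := by
      have h := congrArg Matrix.conjTranspose h1
      rw [Matrix.conjTranspose_mul, hXH, Matrix.conjTranspose_zero] at h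
      exact h
    rw [← Matrix.mul_assoc, this, Matrix.zero_mul]
  have hQ : Q0 = X * B * Rd * Bᵀ * X - X * A0 - A0ᵀ * X := by
    have : Q0 - (X * B * Rd * Bᵀ * X - X * A0 - A0ᵀ * X)
        = X * A0 + A0ᵀ * X - X * B * Rd * Bᵀ * X + Q0 := by abel
    have h0 : Q0 - (X * B * Rd * Bᵀ * X - X * A0 - A0ᵀ * X) = 0 := by rw [this, heq]
    exact sub_eq_zero.mp h0
  have key : (B * G)ᴴ * Q0 * (B * G) = 0 := by
    rw [hQ]
    simp only [Matrix.sub_mul, Matrix.mul_sub, Matrix.mul_assoc]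
    rw [h1, h2, h2]
    simp
  obtain ⟨C, hC⟩ : ∃ C : Matrix (Fin n) (Fin n) ℝ, Q0 = Cᴴ * C := by
    open scoped MatrixOrder in
    exact CStarAlgebra.nonneg_iff_eq_star_mul_self.mp hQ0.nonneg
  have hCBG : C * (B * G) = 0 := by
    have h3 : (C * (B * G))ᴴ * (C * (B * G)) = (B * G)ᴴ * Q0 * (B * G) := by
      simp only [Matrix.conjTranspose_mul, hC, Matrix.mul_assoc]
    exact Matrix.conjTranspose_mul_self_eq_zero.mp (h3.trans key)
  have : Q0 * (B * G) = 0 := by rw [hC, Matrix.mul_assoc, hCBG, Matrix.mul_zero]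
  rw [Matrix.mul_assoc]
  exact this
end

section
/- If X = X^T satisfies the constrained generalized continuous algebraic Riccati equation X A + A^T X − (S + XB) R† (S^T + B^T X) + Q = 0 with ker R ⊆ ker(S + XB), then X also satisfies X A₀ + A₀^T X − X B R† B^T X + Q₀ = 0 and X B G = 0, where A₀ = A − B R† S^T, Q₀ = Q − S R† S^T, and G = I − R† R. -/
open Matrix


lemma pinv_symm {m : ℕ} (R Rd : Matrix (Fin m) (Fin m) ℝ) (hR : Rᵀ = R)
    (h1 : R * Rd * R = R) (h2 : Rd * R * Rd = Rd)
    (h3 : (R * Rd)ᵀ = R * Rd) (h4 : (Rd * R)ᵀ = Rd * R) : Rdᵀ = Rd := by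
  have hAC : R * Rdᵀ = Rd * R := by
    rw [← h4, Matrix.transpose_mul, hR]
  have hCA : Rdᵀ * R = R * Rd := by
    rw [← h3, Matrix.transpose_mul, hR]
  have f1 : R * Rdᵀ * R = R := by
    have := congrArg Matrix.transpose h1
    simpa [Matrix.transpose_mul, hR, Matrix.mul_assoc] using this
  have f2 : Rdᵀ * R * Rdᵀ = Rdᵀ := by
    have := congrArg Matrix.transpose h2
    simpa [Matrix.transpose_mul, hR, Matrix.mul_assoc] using this
  have e1 : Rd = Rd * R * Rdᵀ := by
    calc Rd = Rd * R * Rd := h2.symm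
      _ = Rd * (Rdᵀ * R) := by rw [Matrix.mul_assoc, ← hCA]
      _ = Rd * Rdᵀ * R := (Matrix.mul_assoc _ _ _).symm
      _ = Rd * Rdᵀ * (R * Rd * R) := by rw [h1]
      _ = Rd * (Rdᵀ * R) * (Rd * R) := by simp only [Matrix.mul_assoc]
      _ = Rd * (R * Rd) * (Rd * R) := by rw [hCA]
      _ = Rd * R * Rd * (Rd * R) := by simp only [Matrix.mul_assoc]
      _ = Rd * (Rd * R) := by rw [h2]
      _ = Rd * (R * Rdᵀ) := by rw [← hAC]
      _ = Rd * R * Rdᵀ := (Matrix.mul_assoc _ _ _).symm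
  have e2 : Rdᵀ = Rd * R * Rdᵀ := by
    calc Rdᵀ = Rdᵀ * R * Rdᵀ := f2.symm
      _ = R * Rd * Rdᵀ := by rw [hCA]
      _ = R * Rdᵀ * R * Rd * Rdᵀ := by rw [f1]
      _ = R * Rdᵀ * (R * Rd) * Rdᵀ := by simp only [Matrix.mul_assoc]
      _ = R * Rdᵀ * (Rdᵀ * R) * Rdᵀ := by rw [hCA]
      _ = R * Rdᵀ * (Rdᵀ * R * Rdᵀ) := by simp only [Matrix.mul_assoc]
      _ = R * Rdᵀ * Rdᵀ := by rw [f2]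
      _ = Rd * R * Rdᵀ := by rw [hAC]
  rw [e2, ← e1]

lemma eq_zero_of_forall_mulVec {k l : ℕ} (M : Matrix (Fin k) (Fin l) ℝ)
    (h : ∀ v, M *ᵥ v = 0) : M = 0 := by
  ext i j
  have := congrFun (h (Pi.single j 1)) i
  simpa [Matrix.mulVec_single] using this

/-- From psd of the block matrix, `ker R ⊆ ker S`. -/
lemma ker_sub {n m : ℕ} (Q : Matrix (Fin n) (Fin n) ℝ) (S : Matrix (Fin n) (Fin m) ℝ)
    (R : Matrix (Fin m) (Fin m) ℝ)
    (hPi : (Matrix.fromBlocks Q S Sᵀ R).PosSemidef)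
    (v : Fin m → ℝ) (hv : R *ᵥ v = 0) : S *ᵥ v = 0 := by
  obtain ⟨L, hL⟩ : ∃ L : Matrix (Fin n ⊕ Fin m) (Fin n ⊕ Fin m) ℝ,
      Matrix.fromBlocks Q S Sᵀ R = Lᴴ * L := by
    open scoped MatrixOrder in
    exact CStarAlgebra.nonneg_iff_eq_star_mul_self.mp hPi.nonneg
  set L1 : Matrix (Fin n ⊕ Fin m) (Fin n) ℝ := L.submatrix id Sum.inl with hL1
  set L2 : Matrix (Fin n ⊕ Fin m) (Fin m) ℝ := L.submatrix id Sum.inr with hL2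
  have hRf : R = L2ᵀ * L2 := by
    ext i j
    have := congrFun (congrFun hL (Sum.inr i)) (Sum.inr j)
    simpa [Matrix.mul_apply, hL2, Matrix.submatrix_apply] using this
  have hSf : S = L1ᵀ * L2 := by
    ext i j
    have := congrFun (congrFun hL (Sum.inl i)) (Sum.inr j)
    simpa [Matrix.mul_apply, hL1, hL2, Matrix.submatrix_apply] using this
  have hL2v : L2 *ᵥ v = 0 := by
    have h0 : (L2 *ᵥ v) ⬝ᵥ (L2 *ᵥ v) = 0 := by
      have : v ⬝ᵥ (R *ᵥ v) = 0 := by rw [hv, dotProduct_zero]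
      rw [hRf, ← Matrix.mulVec_mulVec, Matrix.dotProduct_mulVec,
        Matrix.vecMul_transpose] at this
      exact this
    exact dotProduct_self_eq_zero.mp h0
  rw [hSf, ← Matrix.mulVec_mulVec, hL2v, Matrix.mulVec_zero]


/-- If `X = Xᵀ` satisfies the CGCARE
`X A + Aᵀ X − (S + XB) R† (Sᵀ + Bᵀ X) + Q = 0` with `ker R ⊆ ker (S + XB)`,
then `X A₀ + A₀ᵀ X − X B R† Bᵀ X + Q₀ = 0` and `X B G = 0`, where
`A₀ = A − B R† Sᵀ`, `Q₀ = Q − S R† Sᵀ`, `G = I − R† R`. -/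
theorem cgcare_reduced_form {n m : ℕ}
    (A Q X : Matrix (Fin n) (Fin n) ℝ) (B S : Matrix (Fin n) (Fin m) ℝ)
    (R Rd : Matrix (Fin m) (Fin m) ℝ)
    (hQ : Qᵀ = Q) (hX : Xᵀ = X) (hR : Rᵀ = R) (hRpsd : R.PosSemidef)
    (hMP : IsMoorePenroseInv R Rd)
    (hPi : (Matrix.fromBlocks Q S Sᵀ R).PosSemidef)
    (hric : X * A + Aᵀ * X - (S + X * B) * Rd * (Sᵀ + Bᵀ * X) + Q = 0)
    (hker : ∀ v : Fin m → ℝ, R *ᵥ v = 0 → (S + X * B) *ᵥ v = 0) :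
    X * (A - B * Rd * Sᵀ) + (A - B * Rd * Sᵀ)ᵀ * X - X * B * Rd * Bᵀ * X +
        (Q - S * Rd * Sᵀ) = 0 ∧
      X * B * (1 - Rd * R) = 0 := by
  obtain ⟨h1, h2, h3, h4⟩ := hMP
  have hRds : Rdᵀ = Rd := pinv_symm R Rd hR h1 h2 h3 h4
  have hG : R * (1 - Rd * R) = 0 := by
    rw [Matrix.mul_sub, Matrix.mul_one, ← Matrix.mul_assoc, h1, sub_self]
  have hMG : (S + X * B) * (1 - Rd * R) = 0 := by
    apply eq_zero_of_forall_mulVec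
    intro v
    rw [← Matrix.mulVec_mulVec]
    exact hker _ (by rw [Matrix.mulVec_mulVec, hG, Matrix.zero_mulVec])
  have hSG : S * (1 - Rd * R) = 0 := by
    apply eq_zero_of_forall_mulVec
    intro v
    rw [← Matrix.mulVec_mulVec]
    exact ker_sub Q S R hPi _ (by rw [Matrix.mulVec_mulVec, hG, Matrix.zero_mulVec])
  constructor
  · have e : X * (A - B * Rd * Sᵀ) + (A - B * Rd * Sᵀ)ᵀ * X - X * B * Rd * Bᵀ * X +
        (Q - S * Rd * Sᵀ) = X * A + Aᵀ * X - (S + X * B) * Rd * (Sᵀ + Bᵀ * X) + Q := by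
      rw [Matrix.transpose_sub, Matrix.transpose_mul, Matrix.transpose_mul,
        Matrix.transpose_transpose, hRds]
      simp only [Matrix.mul_sub, Matrix.sub_mul, Matrix.mul_add, Matrix.add_mul,
        Matrix.mul_assoc]
      abel
    rw [e]; exact hric
  · rw [Matrix.add_mul, hSG, zero_add] at hMG
    exact hMG
end

section
/- Let X̄ = X̄^T ≥ 0 be a solution of the CGCARE and let A_X̄ = A − B R† (S^T + B^T X̄). Then for the feedback control u(t) = −R†(S^T + B^T X̄) x(t) applied to ẋ = Ax + Bu with x(0) = x₀, the quadratic cost J = ∫₀^∞ [x^T, u^T] Π [x; u] dt satisfies J ≤ x₀^T X̄ x₀ (in particular it is finite). -/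
open Matrix MeasureTheory

/-- Uniqueness of the Moore–Penrose pseudo-inverse. -/
theorem mp_unique_aux {m : ℕ} {R Y Z : Matrix (Fin m) (Fin m) ℝ}
    (hY : IsMoorePenroseInv R Y) (hZ : IsMoorePenroseInv R Z) : Y = Z := by
  obtain ⟨hY1, hY2, hY3, hY4⟩ := hY
  obtain ⟨hZ1, hZ2, hZ3, hZ4⟩ := hZ
  have hRY : R * Y = R * Z := by
    calc R * Y = (R * Y)ᵀ := hY3.symm
    _ = Yᵀ * Rᵀ := by rw [transpose_mul]
    _ = Yᵀ * (R * Z * R)ᵀ := by rw [hZ1]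
    _ = Yᵀ * (Rᵀ * (R * Z)ᵀ) := by rw [transpose_mul]
    _ = Yᵀ * (Rᵀ * (R * Z)) := by rw [hZ3]
    _ = (Yᵀ * Rᵀ) * (R * Z) := by rw [mul_assoc]
    _ = (R * Y)ᵀ * (R * Z) := by rw [transpose_mul]
    _ = (R * Y) * (R * Z) := by rw [hY3]
    _ = (R * Y * R) * Z := by rw [mul_assoc, mul_assoc, mul_assoc]
    _ = R * Z := by rw [hY1]
  have hYR : Y * R = Z * R := by
    calc Y * R = (Y * R)ᵀ := hY4.symm
    _ = Rᵀ * Yᵀ := by rw [transpose_mul]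
    _ = (R * Z * R)ᵀ * Yᵀ := by rw [hZ1]
    _ = ((Z * R)ᵀ * Rᵀ) * Yᵀ := by rw [mul_assoc, transpose_mul]
    _ = (Z * R) * (Rᵀ * Yᵀ) := by rw [hZ4, mul_assoc]
    _ = (Z * R) * (Y * R)ᵀ := by rw [transpose_mul]
    _ = (Z * R) * (Y * R) := by rw [hY4]
    _ = Z * (R * Y * R) := by rw [mul_assoc, mul_assoc]
    _ = Z * R := by rw [hY1]
  calc Y = Y * R * Y := hY2.symm
  _ = Y * (R * Z) := by rw [mul_assoc, hRY]
  _ = (Z * R) * Z := by rw [← mul_assoc, hYR]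
  _ = Z := hZ2

/-- The pseudo-inverse of a symmetric matrix is symmetric. -/
theorem mp_transpose_symm_aux {m : ℕ} {R Rd : Matrix (Fin m) (Fin m) ℝ} (hR : Rᵀ = R)
    (hMP : IsMoorePenroseInv R Rd) : Rdᵀ = Rd := by
  obtain ⟨h1, h2, h3, h4⟩ := hMP
  refine mp_unique_aux ⟨?_, ?_, ?_, ?_⟩ ⟨h1, h2, h3, h4⟩
  · calc R * Rdᵀ * R = (Rᵀ * Rd * Rᵀ)ᵀ := by simp [transpose_mul, mul_assoc]
    _ = (R * Rd * R)ᵀ := by rw [hR]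
    _ = R := by rw [h1, hR]
  · calc Rdᵀ * R * Rdᵀ = (Rd * Rᵀ * Rd)ᵀ := by simp [transpose_mul, mul_assoc]
    _ = (Rd * R * Rd)ᵀ := by rw [hR]
    _ = Rdᵀ := by rw [h2]
  · have : R * Rdᵀ = (Rd * R)ᵀ := by rw [transpose_mul, hR]
    rw [this, transpose_transpose, h4, ← hR]
  · have : Rdᵀ * R = (R * Rd)ᵀ := by rw [transpose_mul, hR]
    rw [this, transpose_transpose, h3, ← hR]

/-- Completion-of-squares identity for the closed loop. -/
theorem key_identity_aux {n m : ℕ}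
    (A : Matrix (Fin n) (Fin n) ℝ) (B S : Matrix (Fin n) (Fin m) ℝ)
    (Q : Matrix (Fin n) (Fin n) ℝ) (R Rd : Matrix (Fin m) (Fin m) ℝ)
    (hR : Rᵀ = R) (hMP : IsMoorePenroseInv R Rd)
    (X : Matrix (Fin n) (Fin n) ℝ) (hXsym : Xᵀ = X)
    (hric : X * A + Aᵀ * X - (S + X * B) * Rd * (Sᵀ + Bᵀ * X) + Q = 0)
    (K : Matrix (Fin m) (Fin n) ℝ) (hK : K = Rd * (Sᵀ + Bᵀ * X)) :
    Q - S * K - Kᵀ * Sᵀ + Kᵀ * (R * K) =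
      -(X * (A - B * K) + (A - B * K)ᵀ * X) := by
  have hRdsym : Rdᵀ = Rd := mp_transpose_symm_aux hR hMP
  obtain ⟨h1, h2, h3, h4⟩ := hMP
  set P := (S + X * B) * Rd * (Sᵀ + Bᵀ * X) with hPdef
  have hKT : Kᵀ = (S + X * B) * Rd := by
    rw [hK, transpose_mul, hRdsym, transpose_add, transpose_transpose,
      transpose_mul, transpose_transpose, hXsym]
  have h2' : ∀ (k : ℕ) (Y : Matrix (Fin k) (Fin m) ℝ), Y * Rd * R * Rd = Y * Rd := by
    intro k Y; rw [Matrix.mul_assoc, Matrix.mul_assoc, ← Matrix.mul_assoc Rd R Rd, h2]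
  have hKRK : Kᵀ * (R * K) = P := by
    rw [hKT, hK, hPdef]
    simp only [← Matrix.mul_assoc]
    rw [h2']
  have hSK : S * K + X * (B * K) = P := by
    rw [hK, hPdef]
    simp only [Matrix.add_mul, Matrix.mul_assoc]
  have hKS : Kᵀ * Sᵀ + Kᵀ * Bᵀ * X = P := by
    rw [Matrix.mul_assoc Kᵀ, hKT, hPdef, ← Matrix.mul_add]
  have e1 : X * A + Aᵀ * X + Q = P := by
    rw [← sub_eq_zero, ← hric, hPdef]; abel
  have expand : -(X * (A - B * K) + (A - B * K)ᵀ * X)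
      = -(X * A) - Aᵀ * X + X * (B * K) + Kᵀ * Bᵀ * X := by
    rw [transpose_sub, transpose_mul]
    noncomm_ring
  have e2 : -(X * A) - Aᵀ * X = Q - P := by rw [← e1]; abel
  rw [expand, e2, hKRK]
  calc Q - S * K - Kᵀ * Sᵀ + P
      = Q - S * K - Kᵀ * Sᵀ + (S * K + X * (B * K)) := by rw [hSK]
    _ = Q - (Kᵀ * Sᵀ + Kᵀ * Bᵀ * X) + X * (B * K) + Kᵀ * Bᵀ * X := by abel
    _ = Q - P + X * (B * K) + Kᵀ * Bᵀ * X := by rw [hKS]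

/-- Rewriting the running cost as a quadratic form in the state. -/
theorem quad_form_aux {n m : ℕ} (Q : Matrix (Fin n) (Fin n) ℝ) (S : Matrix (Fin n) (Fin m) ℝ)
    (R : Matrix (Fin m) (Fin m) ℝ) (K : Matrix (Fin m) (Fin n) ℝ) (v : Fin n → ℝ) :
    v ⬝ᵥ (Q *ᵥ v) + v ⬝ᵥ (S *ᵥ (-(K *ᵥ v))) + (-(K *ᵥ v)) ⬝ᵥ (Sᵀ *ᵥ v)
      + (-(K *ᵥ v)) ⬝ᵥ (R *ᵥ (-(K *ᵥ v)))
    = v ⬝ᵥ ((Q - S * K - Kᵀ * Sᵀ + Kᵀ * (R * K)) *ᵥ v) := by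
  have hKv : ∀ (k : ℕ) (N : Matrix (Fin m) (Fin k) ℝ) (w : Fin k → ℝ),
      (K *ᵥ v) ⬝ᵥ (N *ᵥ w) = v ⬝ᵥ ((Kᵀ * N) *ᵥ w) := by
    intro k N w
    conv_rhs => rw [← Matrix.mulVec_mulVec, Matrix.dotProduct_mulVec, Matrix.vecMul_transpose]
  simp only [Matrix.mulVec_neg, dotProduct_neg, neg_dotProduct, neg_neg,
    Matrix.mulVec_mulVec, Matrix.sub_mulVec, Matrix.add_mulVec, dotProduct_sub,
    dotProduct_add, hKv]
  ring

/-- If `X̄ = X̄ᵀ ≥ 0` solves the CGCARE, then the feedback control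
`u = −R†(Sᵀ + Bᵀ X̄) x` applied to `ẋ = Ax + Bu`, `x(0) = x₀` (so that
`x(t) = exp(A_X̄ t) x₀` with `A_X̄ = A − B R†(Sᵀ + Bᵀ X̄)`) yields a cost
`J = ∫₀^∞ [xᵀ uᵀ] Π [x; u] dt` which is finite and satisfies `J ≤ x₀ᵀ X̄ x₀`. -/
theorem feedback_cost_finite_and_bounded {n m : ℕ}
    (A : Matrix (Fin n) (Fin n) ℝ) (B S : Matrix (Fin n) (Fin m) ℝ)
    (Q : Matrix (Fin n) (Fin n) ℝ) (R Rd : Matrix (Fin m) (Fin m) ℝ)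
    (hQ : Qᵀ = Q) (hR : Rᵀ = R) (hRpsd : R.PosSemidef)
    (hMP : IsMoorePenroseInv R Rd)
    (hPi : (Matrix.fromBlocks Q S Sᵀ R).PosSemidef)
    (X : Matrix (Fin n) (Fin n) ℝ) (hXsym : Xᵀ = X) (hXpsd : X.PosSemidef)
    (hric : X * A + Aᵀ * X - (S + X * B) * Rd * (Sᵀ + Bᵀ * X) + Q = 0)
    (hker : ∀ v : Fin m → ℝ, R *ᵥ v = 0 → (S + X * B) *ᵥ v = 0)
    (x₀ : Fin n → ℝ)
    (K : Matrix (Fin m) (Fin n) ℝ) (hK : K = Rd * (Sᵀ + Bᵀ * X))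
    (x : ℝ → Fin n → ℝ)
    (hx : ∀ t : ℝ, x t = NormedSpace.exp (t • (A - B * K)) *ᵥ x₀)
    (u : ℝ → Fin m → ℝ) (hu : ∀ t : ℝ, u t = -(K *ᵥ x t))
    (f : ℝ → ℝ)
    (hf : ∀ t : ℝ, f t =
      x t ⬝ᵥ (Q *ᵥ x t) + x t ⬝ᵥ (S *ᵥ u t) + u t ⬝ᵥ (Sᵀ *ᵥ x t) + u t ⬝ᵥ (R *ᵥ u t)) :
    IntegrableOn f (Set.Ioi 0) volume ∧
      ∫ t in Set.Ioi (0 : ℝ), f t ≤ x₀ ⬝ᵥ (X *ᵥ x₀) := by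
  classical
  letI : NormedRing (Matrix (Fin n) (Fin n) ℝ) := Matrix.linftyOpNormedRing
  letI : NormedAlgebra ℝ (Matrix (Fin n) (Fin n) ℝ) := Matrix.linftyOpNormedAlgebra
  set AK := A - B * K with hAKdef
  -- derivative of the state
  have hxd : ∀ t : ℝ, HasDerivAt x (AK *ᵥ x t) t := by
    intro t
    have hder : HasDerivAt (fun s : ℝ => NormedSpace.exp (s • AK))
        (AK * NormedSpace.exp (t • AK)) t :=
      hasDerivAt_exp_smul_const' AK t
    let Lm : Matrix (Fin n) (Fin n) ℝ →ₗ[ℝ] (Fin n → ℝ) :=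
      { toFun := fun M => M *ᵥ x₀
        map_add' := fun M N => Matrix.add_mulVec M N x₀
        map_smul' := fun c M => Matrix.smul_mulVec c M x₀ }
    let L := LinearMap.toContinuousLinearMap Lm
    have h2 : HasDerivAt (fun s => L (NormedSpace.exp (s • AK)))
        (L (AK * NormedSpace.exp (t • AK))) t :=
      L.hasFDerivAt.comp_hasDerivAt t hder
    have h3 : (fun s => L (NormedSpace.exp (s • AK))) = x := by
      funext s; simp [L, Lm, LinearMap.toContinuousLinearMap, hx]
    rw [h3] at h2
    have h4 : L (AK * NormedSpace.exp (t • AK)) = AK *ᵥ x t := by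
      simp [L, Lm, LinearMap.toContinuousLinearMap, hx, Matrix.mulVec_mulVec]
    rwa [h4] at h2
  have hxc : Continuous x := continuous_iff_continuousAt.mpr fun t => (hxd t).continuousAt
  -- the running cost as a quadratic form
  set M2 := Q - S * K - Kᵀ * Sᵀ + Kᵀ * (R * K) with hM2def
  have hfM : ∀ t : ℝ, f t = x t ⬝ᵥ (M2 *ᵥ x t) := by
    intro t
    rw [hf, hu, hM2def]
    exact quad_form_aux Q S R K (x t)
  -- key identity
  have hkey : M2 = -(X * AK + AKᵀ * X) :=
    key_identity_aux A B S Q R Rd hR hMP X hXsym hric K hK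
  -- continuity and nonnegativity of f
  have hfc : Continuous f := by
    have : Continuous fun t => x t ⬝ᵥ (M2 *ᵥ x t) :=
      hxc.dotProduct (continuous_const.matrix_mulVec hxc)
    simpa [funext hfM] using this
  have hf0 : ∀ t : ℝ, 0 ≤ f t := by
    intro t
    have h := hPi.dotProduct_mulVec_nonneg (Sum.elim (x t) (u t))
    rw [hf]
    simpa [Matrix.fromBlocks_mulVec, sumElim_dotProduct_sumElim,
      dotProduct_add, add_assoc] using h
  -- the Lyapunov function g
  set g : ℝ → ℝ := fun t => x t ⬝ᵥ (X *ᵥ x t) with hgdef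
  have hg0 : ∀ t : ℝ, 0 ≤ g t := by
    intro t
    simpa using hXpsd.dotProduct_mulVec_nonneg (x t)
  have hgd : ∀ t : ℝ, HasDerivAt (fun s => -(g s)) (f t) t := by
    intro t
    have hxi : ∀ i, HasDerivAt (fun s => x s i) ((AK *ᵥ x t) i) t :=
      fun i => hasDerivAt_pi.1 (hxd t) i
    have hXxi : ∀ i, HasDerivAt (fun s => (X *ᵥ x s) i) ((X *ᵥ (AK *ᵥ x t)) i) t := by
      intro i
      simp only [Matrix.mulVec, dotProduct]
      exact HasDerivAt.fun_sum fun j _ => (hxi j).const_mul (X i j)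
    have hsum : HasDerivAt (fun s => ∑ i, x s i * (X *ᵥ x s) i)
        (∑ i, ((AK *ᵥ x t) i * (X *ᵥ x t) i + x t i * (X *ᵥ (AK *ᵥ x t)) i)) t :=
      HasDerivAt.fun_sum fun i _ => (hxi i).mul (hXxi i)
    have hgsum : HasDerivAt g
        ((AK *ᵥ x t) ⬝ᵥ (X *ᵥ x t) + x t ⬝ᵥ (X *ᵥ (AK *ᵥ x t))) t := by
      have e : (∑ i, ((AK *ᵥ x t) i * (X *ᵥ x t) i + x t i * (X *ᵥ (AK *ᵥ x t)) i))
          = (AK *ᵥ x t) ⬝ᵥ (X *ᵥ x t) + x t ⬝ᵥ (X *ᵥ (AK *ᵥ x t)) := by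
        simp [dotProduct, Finset.sum_add_distrib]
      rw [e] at hsum
      exact hsum
    have hderval : (AK *ᵥ x t) ⬝ᵥ (X *ᵥ x t) + x t ⬝ᵥ (X *ᵥ (AK *ᵥ x t)) = -(f t) := by
      have e1 : (AK *ᵥ x t) ⬝ᵥ (X *ᵥ x t) = x t ⬝ᵥ ((AKᵀ * X) *ᵥ x t) := by
        conv_rhs => rw [← Matrix.mulVec_mulVec, Matrix.dotProduct_mulVec,
          Matrix.vecMul_transpose]
      have e2 : x t ⬝ᵥ (X *ᵥ (AK *ᵥ x t)) = x t ⬝ᵥ ((X * AK) *ᵥ x t) := by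
        rw [Matrix.mulVec_mulVec]
      rw [e1, e2, hfM t, hkey, ← dotProduct_add, ← Matrix.add_mulVec]
      simp only [neg_add, Matrix.add_mulVec, Matrix.neg_mulVec,
        dotProduct_add, dotProduct_neg]
      ring
    rw [hderval] at hgsum
    simpa using hgsum.fun_neg
  -- fundamental theorem of calculus on [0, T]
  have hFTC : ∀ T : ℝ, ∫ t in (0:ℝ)..T, f t = g 0 - g T := by
    intro T
    have h := intervalIntegral.integral_eq_sub_of_hasDerivAt
      (f := fun s => -(g s)) (f' := f) (fun t _ => hgd t)
      (hfc.intervalIntegrable 0 T)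
    rw [h]; ring
  have hgzero : g 0 = x₀ ⬝ᵥ (X *ᵥ x₀) := by
    have : x 0 = x₀ := by
      rw [hx 0, zero_smul, NormedSpace.exp_zero, Matrix.one_mulVec]
    rw [hgdef]; simp [this]
  have hbound : ∀ T : ℝ, ∫ t in (0:ℝ)..T, f t ≤ x₀ ⬝ᵥ (X *ᵥ x₀) := by
    intro T
    rw [hFTC T, ← hgzero]
    linarith [hg0 T]
  -- integrability on (0, ∞)
  have hInt : IntegrableOn f (Set.Ioi 0) volume := by
    apply MeasureTheory.integrableOn_Ioi_of_intervalIntegral_norm_bounded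
      (x₀ ⬝ᵥ (X *ᵥ x₀)) 0 (b := fun T : ℝ => T) (l := Filter.atTop)
      (fun i => hfc.integrableOn_Ioc) Filter.tendsto_id
    filter_upwards [Filter.eventually_ge_atTop (0:ℝ)] with T hT
    have : ∫ t in (0:ℝ)..T, ‖f t‖ = ∫ t in (0:ℝ)..T, f t := by
      apply intervalIntegral.integral_congr
      intro s _
      exact Real.norm_of_nonneg (hf0 s)
    rw [this]
    exact hbound T
  refine ⟨hInt, ?_⟩
  have htend := MeasureTheory.intervalIntegral_tendsto_integral_Ioi
    (0:ℝ) hInt (Filter.tendsto_id (x := Filter.atTop))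
  exact le_of_tendsto htend (Filter.Eventually.of_forall hbound)
end
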